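/- For every n ≥ 0 and i with 0 ≤ i ≤ n, the coefficient of H^i in the power series expansion of (1+H)^{n+2}/(1+2H) in Z[[H]] is a positive integer. -/

import Mathlib

open PowerSeries

private lemma coeff_one_add_X_pow' (m i : ℕ) :
    coeff (R := ℤ) i ((1 + X) ^ m) = m.choose i := by
  have : ((1 : ℤ⟦X⟧) + X) ^ m = ((((1 + Polynomial.X) ^ m : Polynomial ℤ)) : ℤ⟦X⟧) := by
    push_cast; rfl
  rw [this, Polynomial.coeff_coe, Polynomial.coeff_one_add_X_pow]

private lemma coeff_mul_one' (φ ψ : ℤ⟦X⟧) : coeff (R := ℤ) 1 (φ * ψ) =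
    coeff (R := ℤ) 0 φ * coeff (R := ℤ) 1 ψ + coeff (R := ℤ) 1 φ * coeff (R := ℤ) 0 ψ := by
  rw [coeff_mul, Finset.Nat.sum_antidiagonal_eq_sum_range_succ_mk]
  simp [Finset.sum_range_succ]

private lemma quadric_key : ∀ n : ℕ, ∀ i ≤ n,
    0 < (PowerSeries.coeff (R := ℤ) i)
      ((1 + PowerSeries.X) ^ (n + 2) *
        PowerSeries.invOfUnit (1 + 2 * PowerSeries.X) 1) := by
  set I : ℤ⟦X⟧ := PowerSeries.invOfUnit (1 + 2 * PowerSeries.X) 1 with hIdef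
  have hI : ((1 : ℤ⟦X⟧) + 2 * X) * I = 1 := by
    apply mul_invOfUnit; simp
  have hc0 : constantCoeff (R := ℤ) I = 1 := by
    rw [hIdef, constantCoeff_invOfUnit]; rfl
  have hc0' : coeff (R := ℤ) 0 I = 1 := by rwa [coeff_zero_eq_constantCoeff]
  have hc1 : coeff (R := ℤ) 1 I = -2 := by
    have h := congrArg (coeff (R := ℤ) 1) hI
    rw [coeff_mul_one'] at h
    simp [hc0', map_ofNat] at h
    linarith
  -- constant coeff of the product
  have hcoeff0 : ∀ m : ℕ, coeff (R := ℤ) 0 ((1 + X) ^ m * I) = 1 := by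
    intro m
    rw [coeff_zero_eq_constantCoeff, map_mul, map_pow, hc0]
    simp
  have hcoeff1 : ∀ m : ℕ, coeff (R := ℤ) 1 ((1 + X) ^ m * I) = (m : ℤ) - 2 := by
    intro m
    rw [coeff_mul_one', hc1, hc0', coeff_one_add_X_pow', coeff_one_add_X_pow']
    simp [Nat.choose_one_right]
    ring
  -- key recursion
  have hstep : ∀ m : ℕ, (1 + X) ^ (m + 2) * I = (1 + X) ^ m + X ^ 2 * ((1 + X) ^ m * I) := by
    intro m
    have h2 : ((1 : ℤ⟦X⟧) + X) ^ 2 = (1 + 2 * X) + X ^ 2 := by ring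
    calc (1 + X) ^ (m + 2) * I = (1 + X) ^ m * (((1 + 2*X) + X ^ 2) * I) := by
          rw [← h2]; ring
      _ = (1 + X) ^ m * ((1 + 2*X) * I + X ^ 2 * I) := by ring
      _ = (1 + X) ^ m + X ^ 2 * ((1 + X) ^ m * I) := by rw [hI]; ring
  intro n
  induction n using Nat.strong_induction_on with
  | _ n ih =>
    intro i hi
    match i, hi with
    | 0, _ => rw [hcoeff0]; norm_num
    | 1, hi => rw [hcoeff1]; push_cast; omega
    | (j+2), hi =>
      obtain ⟨m, rfl⟩ : ∃ m, n = m + 2 := ⟨n - 2, by omega⟩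
      rw [hstep (m + 2), map_add, coeff_X_pow_mul, coeff_one_add_X_pow']
      have hpos := ih m (by omega) j (by omega)
      positivity

/-- For every `n ≥ 0` and `0 ≤ i ≤ n`, the coefficient of `H^i` in the power
series expansion of `(1+H)^(n+2)/(1+2H)` in `ℤ⟦H⟧` is a positive integer.  Here
`1/(1+2H)` is the formal inverse of `1+2H` (whose constant coefficient is the unit `1`). -/
theorem quadric_chern_coeff_pos (n i : ℕ) (hi : i ≤ n) :
    0 < (PowerSeries.coeff (R := ℤ) i)
      ((1 + PowerSeries.X) ^ (n + 2) *
        PowerSeries.invOfUnit (1 + 2 * PowerSeries.X) 1) := by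
  exact quadric_key n i hi
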